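/- Let β be a totally real algebraic number with T(β) = 0. Then the difference between the largest and the smallest conjugate of β is at least 2√(T(β²)). -/

import Mathlib

/-- `x : ℝ` is a totally real algebraic number: it is algebraic over `ℚ` and all
complex roots of its minimal polynomial are real. -/
def IsTotallyReal (x : ℝ) : Prop :=
  IsAlgebraic ℚ x ∧ ∀ z : ℂ, Polynomial.aeval z (minpoly ℚ x) = 0 → z.im = 0

/-- The normalized trace of a real algebraic number: the sum of the real roots of its
minimal polynomial divided by its degree. -/
noncomputable def normTrace (x : ℝ) : ℝ :=
  ((minpoly ℚ x).aroots ℝ).sum / (minpoly ℚ x).natDegree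

open Polynomial IntermediateField Module

lemma splits_of_real_roots {p : ℚ[X]} (hp : p ≠ 0)
    (hr : ∀ z : ℂ, aeval z p = 0 → z.im = 0) :
    (p.map (algebraMap ℚ ℝ)).Splits := by
  refine Polynomial.Splits.of_splits_map (algebraMap ℝ ℂ) ?_ ?_
  · have : (algebraMap ℝ ℂ).comp (algebraMap ℚ ℝ) = algebraMap ℚ ℂ := by
      ext1; simp
    rw [Polynomial.map_map, this]
    exact IsAlgClosed.splits _
  · intro a ha
    rw [Polynomial.map_map] at ha
    have ha' : aeval a p = 0 := by
      have := (Polynomial.mem_roots (by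
        simpa using (Polynomial.map_ne_zero hp :
          p.map ((algebraMap ℝ ℂ).comp (algebraMap ℚ ℝ)) ≠ 0))).mp ha
      rw [Polynomial.IsRoot, Polynomial.eval_map] at this
      simpa [Polynomial.aeval_def, IsScalarTower.algebraMap_eq ℚ ℝ ℂ] using this
    have him := hr a ha'
    exact ⟨a.re, by simp [Complex.ext_iff, him]⟩

lemma root_of_sq_real (β : ℝ) (h : IsAlgebraic ℚ β)
    (hreal : ∀ z : ℂ, aeval z (minpoly ℚ β) = 0 → z.im = 0)
    (z : ℂ) (hz : aeval z (minpoly ℚ (β^2)) = 0) : z.im = 0 := by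
  have hβ : IsIntegral ℚ β := h.isIntegral
  have hx : (β^2 : ℝ) ∈ IntermediateField.adjoin ℚ {β} :=
    pow_mem (IntermediateField.mem_adjoin_simple_self ℚ β) 2
  obtain ⟨φ, hφ⟩ := IntermediateField.exists_algHom_adjoin_of_splits_of_aeval
    (F := ℚ) (E := ℝ) (K := ℂ) (S := {β})
    (fun s hs => by
      rw [Set.mem_singleton_iff] at hs; subst hs
      exact ⟨hβ, IsAlgClosed.splits _⟩) hx hz
  set w : ℂ := φ (IntermediateField.AdjoinSimple.gen ℚ β) with hw
  have hwroot : aeval w (minpoly ℚ β) = 0 := by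
    have hm : minpoly ℚ β = minpoly ℚ (IntermediateField.AdjoinSimple.gen ℚ β) := by
      conv_lhs => rw [← IntermediateField.AdjoinSimple.algebraMap_gen ℚ β]
      exact minpoly.algebraMap_eq (algebraMap ℚ⟮β⟯ ℝ).injective _
    rw [hm, hw, Polynomial.aeval_algHom_apply, minpoly.aeval, map_zero]
  have hwim : w.im = 0 := hreal w hwroot
  have hzw : z = w ^ 2 := by
    have h1 : (⟨β^2, hx⟩ : ℚ⟮β⟯) = (IntermediateField.AdjoinSimple.gen ℚ β) ^ 2 := by
      ext; simp
    rw [← hφ, h1, map_pow, hw]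
  rw [hzw]
  simp [pow_two, Complex.mul_im, hwim]


set_option synthInstance.maxHeartbeats 400000 in
lemma trace_sq_mul_deg {L : Type*} [Field L] [Algebra ℚ L] [FiniteDimensional ℚ L] (x : L)
    (hsp : ((minpoly ℚ (x ^ 2)).map (algebraMap ℚ ℝ)).Splits) :
    algebraMap ℚ ℝ (Algebra.trace ℚ L (x ^ 2)) * (minpoly ℚ (x ^ 2)).natDegree
      = ((minpoly ℚ (x ^ 2)).aroots ℝ).sum * (Module.finrank ℚ L) := by
  have h1 := trace_eq_trace_adjoin ℚ (x ^ 2)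
  have h2 := IntermediateField.AdjoinSimple.trace_gen_eq_sum_roots (K := ℚ) (F := ℝ) (x ^ 2) hsp
  have h3 : Module.finrank ℚ ℚ⟮x ^ 2⟯ = (minpoly ℚ (x ^ 2)).natDegree :=
    IntermediateField.adjoin.finrank (IsIntegral.of_finite ℚ _)
  have h4 : Module.finrank ℚ ℚ⟮x ^ 2⟯ * Module.finrank ℚ⟮x ^ 2⟯ L = Module.finrank ℚ L :=
    Module.finrank_mul_finrank ℚ ℚ⟮x ^ 2⟯ L
  rw [h1, map_nsmul, nsmul_eq_mul, h2, ← h4, ← h3]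
  push_cast
  ring

set_option maxHeartbeats 2000000 in
set_option synthInstance.maxHeartbeats 1000000 in
theorem stmt_10 (β : ℝ) (h : IsTotallyReal β) (hT : normTrace β = 0) :
    ∃ x y : ℝ, Polynomial.aeval x (minpoly ℚ β) = 0 ∧ Polynomial.aeval y (minpoly ℚ β) = 0 ∧
      2 * Real.sqrt (normTrace (β ^ 2)) ≤ x - y := by
  have hβ : IsIntegral ℚ β := h.1.isIntegral
  have hb2 : IsIntegral ℚ (β ^ 2) := hβ.pow 2
  set p := minpoly ℚ β with hp
  set q := minpoly ℚ (β ^ 2) with hq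
  haveI : FiniteDimensional ℚ ℚ⟮β⟯ := IntermediateField.adjoin.finiteDimensional hβ
  have hps : (p.map (algebraMap ℚ ℝ)).Splits := splits_of_real_roots (minpoly.ne_zero hβ) h.2
  have hqs : (q.map (algebraMap ℚ ℝ)).Splits :=
    splits_of_real_roots (minpoly.ne_zero hb2) (root_of_sq_real β h.1 h.2)
  set bK := IntermediateField.AdjoinSimple.gen ℚ β with hbK
  have hminβ : p = minpoly ℚ bK := by
    conv_lhs => rw [hp, ← IntermediateField.AdjoinSimple.algebraMap_gen ℚ β]
    exact minpoly.algebraMap_eq (algebraMap ℚ⟮β⟯ ℝ).injective _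
  have hminq : q = minpoly ℚ (bK ^ 2) := by
    have : algebraMap ℚ⟮β⟯ ℝ (bK ^ 2) = β ^ 2 := by
      rw [map_pow, IntermediateField.AdjoinSimple.algebraMap_gen]
    conv_lhs => rw [hq, ← this]
    exact minpoly.algebraMap_eq (algebraMap ℚ⟮β⟯ ℝ).injective _
  set n := p.natDegree with hn
  set d := q.natDegree with hd
  have hnpos : 0 < n := minpoly.natDegree_pos hβ
  have hdpos : 0 < d := minpoly.natDegree_pos hb2
  -- roots of p in ℝ
  have hcardroots : (p.aroots ℝ).card = n := by
    rw [hn, ← Polynomial.natDegree_map (algebraMap ℚ ℝ), hps.natDegree_eq_card_roots, Polynomial.aroots_def]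
  have hrootsne : (p.aroots ℝ) ≠ 0 := by
    intro h0
    rw [h0, Multiset.card_zero] at hcardroots
    omega
  set S := (p.aroots ℝ).toFinset with hS
  have hSne : S.Nonempty := by rwa [hS, Multiset.toFinset_nonempty]
  set M := S.max' hSne with hM
  set μ := S.min' hSne with hμ
  have hMmem : M ∈ S := S.max'_mem hSne
  have hμmem : μ ∈ S := S.min'_mem hSne
  have hrootS : ∀ r ∈ S, aeval r p = 0 := by
    intro r hr
    rw [hS, Multiset.mem_toFinset, Polynomial.mem_aroots] at hr
    exact hr.2
  have hμM : μ ≤ M := S.min'_le _ hMmem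
  -- embeddings
  have hr : ∀ σ : ℚ⟮β⟯ →ₐ[ℚ] ℂ, σ bK = ((σ bK).re : ℂ) ∧ ((σ bK).re) ∈ S := by
    intro σ
    have hroot : aeval (σ bK) p = 0 := by
      rw [hminβ, Polynomial.aeval_algHom_apply, minpoly.aeval, map_zero]
    have him : (σ bK).im = 0 := h.2 _ hroot
    have heq : σ bK = ((σ bK).re : ℂ) := by
      exact Complex.ext rfl (by simp [him])
    refine ⟨heq, ?_⟩
    have : aeval ((σ bK).re) p = 0 := by
      have h2 : aeval (((σ bK).re : ℂ)) p = 0 := by rw [← heq]; exact hroot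
      have h3 := Polynomial.aeval_algebraMap_apply ℂ ((σ bK).re) p
      rw [Complex.coe_algebraMap] at h3
      rw [h3] at h2
      exact_mod_cast h2
    rw [hS, Multiset.mem_toFinset, Polynomial.mem_aroots]
    exact ⟨minpoly.ne_zero hβ, this⟩
  have hbounds : ∀ σ : ℚ⟮β⟯ →ₐ[ℚ] ℂ, μ ≤ (σ bK).re ∧ (σ bK).re ≤ M :=
    fun σ => ⟨S.min'_le _ (hr σ).2, S.le_max' _ (hr σ).2⟩
  -- trace of bK
  have ht1R : algebraMap ℚ ℝ (Algebra.trace ℚ ℚ⟮β⟯ bK) = (p.aroots ℝ).sum := by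
    have := IntermediateField.AdjoinSimple.trace_gen_eq_sum_roots (K := ℚ) (L := ℝ) (F := ℝ) β hps
    rw [← hp] at this; exact this
  have hsum0 : (p.aroots ℝ).sum = 0 := by
    have := hT
    rw [normTrace] at this
    rw [← hp, ← hn] at this
    have hne : (n : ℝ) ≠ 0 := Nat.cast_ne_zero.mpr hnpos.ne'
    field_simp at this
    simpa using this
  have ht10 : Algebra.trace ℚ ℚ⟮β⟯ bK = 0 := by
    apply (algebraMap ℚ ℝ).injective
    rw [ht1R, hsum0, map_zero]
  have hemb1 : ∑ σ : ℚ⟮β⟯ →ₐ[ℚ] ℂ, σ bK = 0 := by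
    have := trace_eq_sum_embeddings (E := ℂ) (K := ℚ) (L := ℚ⟮β⟯) (x := bK)
    rw [ht10, map_zero] at this
    exact this.symm
  have hsumr0 : ∑ σ : ℚ⟮β⟯ →ₐ[ℚ] ℂ, (σ bK).re = 0 := by
    have : ((∑ σ : ℚ⟮β⟯ →ₐ[ℚ] ℂ, (σ bK).re : ℝ) : ℂ) = 0 := by
      push_cast
      rw [← hemb1]
      exact Finset.sum_congr rfl fun σ _ => ((hr σ).1).symm
    exact_mod_cast this
  -- trace of bK^2 via helper
  have hK2 : algebraMap ℚ ℝ (Algebra.trace ℚ ℚ⟮β⟯ (bK ^ 2)) * (d : ℝ)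
      = (q.aroots ℝ).sum * (n : ℝ) := by
    have := trace_sq_mul_deg (L := ℚ⟮β⟯) bK (by rw [← hminq]; exact hqs)
    rw [← hminq] at this
    rw [IntermediateField.adjoin.finrank hβ, ← hp, ← hd, ← hn] at this
    exact_mod_cast this
  have hemb2 : algebraMap ℚ ℂ (Algebra.trace ℚ ℚ⟮β⟯ (bK ^ 2))
      = ∑ σ : ℚ⟮β⟯ →ₐ[ℚ] ℂ, (σ bK) ^ 2 := by
    rw [trace_eq_sum_embeddings (E := ℂ)]
    exact Finset.sum_congr rfl fun σ _ => by rw [map_pow]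
  have hsumsq : ∑ σ : ℚ⟮β⟯ →ₐ[ℚ] ℂ, ((σ bK).re) ^ 2
      = algebraMap ℚ ℝ (Algebra.trace ℚ ℚ⟮β⟯ (bK ^ 2)) := by
    have hcast : ((∑ σ : ℚ⟮β⟯ →ₐ[ℚ] ℂ, ((σ bK).re) ^ 2 : ℝ) : ℂ)
        = ((algebraMap ℚ ℝ (Algebra.trace ℚ ℚ⟮β⟯ (bK ^ 2)) : ℝ) : ℂ) := by
      push_cast
      calc ∑ σ : ℚ⟮β⟯ →ₐ[ℚ] ℂ, (((σ bK).re : ℂ)) ^ 2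
          = ∑ σ : ℚ⟮β⟯ →ₐ[ℚ] ℂ, (σ bK) ^ 2 :=
            Finset.sum_congr rfl fun σ _ => by rw [← (hr σ).1]
        _ = algebraMap ℚ ℂ (Algebra.trace ℚ ℚ⟮β⟯ (bK ^ 2)) := hemb2.symm
        _ = ((algebraMap ℚ ℝ (Algebra.trace ℚ ℚ⟮β⟯ (bK ^ 2)) : ℝ) : ℂ) := by
            rw [IsScalarTower.algebraMap_apply ℚ ℝ ℂ]; rfl
    exact_mod_cast hcast
  have hfr1 : finrank ℚ ℚ⟮β⟯ = n := by
    rw [IntermediateField.adjoin.finrank hβ, hn, hp]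
  have hcard : Fintype.card (ℚ⟮β⟯ →ₐ[ℚ] ℂ) = n := by rw [AlgHom.card]; exact hfr1
  -- the inequality
  have hineq : algebraMap ℚ ℝ (Algebra.trace ℚ ℚ⟮β⟯ (bK ^ 2)) ≤ (n : ℝ) * (-(μ * M)) := by
    rw [← hsumsq]
    calc ∑ σ : ℚ⟮β⟯ →ₐ[ℚ] ℂ, ((σ bK).re) ^ 2
        ≤ ∑ σ : ℚ⟮β⟯ →ₐ[ℚ] ℂ, ((M + μ) * (σ bK).re - μ * M) := by
          apply Finset.sum_le_sum
          intro σ _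
          have h1 := (hbounds σ).1
          have h2 := (hbounds σ).2
          nlinarith
      _ = (M + μ) * (∑ σ : ℚ⟮β⟯ →ₐ[ℚ] ℂ, (σ bK).re)
            - (Fintype.card (ℚ⟮β⟯ →ₐ[ℚ] ℂ) : ℝ) * (μ * M) := by
          rw [Finset.sum_sub_distrib, ← Finset.mul_sum, Finset.sum_const]
          simp [Finset.card_univ]
      _ = (n : ℝ) * (-(μ * M)) := by rw [hsumr0, hcard]; ring
  have hnT : normTrace (β ^ 2) ≤ -(μ * M) := by
    have hval : normTrace (β ^ 2) = (q.aroots ℝ).sum / d := by rw [normTrace, ← hq, ← hd]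
    rw [hval]
    rw [div_le_iff₀ (by exact_mod_cast hdpos)]
    have hnR : (0 : ℝ) < n := by exact_mod_cast hnpos
    have hdR : (0 : ℝ) < d := by exact_mod_cast hdpos
    nlinarith [hK2, hineq]
  have hkey : normTrace (β ^ 2) ≤ ((M - μ) / 2) ^ 2 := by nlinarith [hnT, sq_nonneg (M + μ)]
  refine ⟨M, μ, hrootS M hMmem, hrootS μ hμmem, ?_⟩
  have hs1 : Real.sqrt (normTrace (β ^ 2)) ≤ (M - μ) / 2 := by
    calc Real.sqrt (normTrace (β ^ 2)) ≤ Real.sqrt (((M - μ) / 2) ^ 2) :=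
          Real.sqrt_le_sqrt hkey
      _ = (M - μ) / 2 := Real.sqrt_sq (by linarith)
  linarith
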